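/- The functions H1 = q + s and H2 = q² + r² are first integrals of the transformed autonomous Lü system p' = αq + s, q' = -rp, r' = qp, s' = rp, and so is H3 = (1/2)p² + (q+s)·arcsin(q/√(q²+r²)) - (α-1)r on the region r > 0. -/

import Mathlib

open Real

/-- H₁ = q + s and H₂ = q² + r² are first integrals of the transformed
autonomous Lü system p' = αq + s, q' = -rp, r' = qp, s' = rp, and so is
H₃ = (1/2)p² + (q+s)·arcsin(q/√(q²+r²)) - (α-1)r on the region r > 0. -/
theorem lu_autonomous_first_integrals (α : ℝ)
    (s p q r : ℝ → ℝ)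
    (hp : ∀ t, HasDerivAt p (α * q t + s t) t)
    (hq : ∀ t, HasDerivAt q (-(r t * p t)) t)
    (hr : ∀ t, HasDerivAt r (q t * p t) t)
    (hs : ∀ t, HasDerivAt s (r t * p t) t) :
    (∀ t, HasDerivAt (fun t => q t + s t) 0 t) ∧
    (∀ t, HasDerivAt (fun t => (q t) ^ 2 + (r t) ^ 2) 0 t) ∧
    (∀ t, (∀ τ, 0 < r τ) → HasDerivAt (fun t =>
      (1 / 2) * (p t) ^ 2 +
        (q t + s t) * arcsin (q t / sqrt ((q t) ^ 2 + (r t) ^ 2)) -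
        (α - 1) * r t) 0 t) := by
  have h2 : ∀ t, HasDerivAt (fun t => (q t) ^ 2 + (r t) ^ 2) 0 t := by
    intro t
    have h := ((hq t).pow 2).add ((hr t).pow 2)
    exact h.congr_deriv (by ring)
  refine ⟨fun t => ?_, h2, fun t hpos => ?_⟩
  · have h := (hq t).add (hs t)
    exact h.congr_deriv (by ring)
  · have hrt := hpos t
    have hNpos : 0 < (q t) ^ 2 + (r t) ^ 2 := by positivity
    set S := sqrt ((q t) ^ 2 + (r t) ^ 2) with hSdef
    have hSpos : 0 < S := Real.sqrt_pos.mpr hNpos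
    have hS2 : S ^ 2 = (q t) ^ 2 + (r t) ^ 2 := Real.sq_sqrt hNpos.le
    have hsqrt : HasDerivAt (fun τ => sqrt ((q τ) ^ 2 + (r τ) ^ 2)) 0 t := by
      have h := (h2 t).sqrt hNpos.ne'
      simpa using h
    have hu : HasDerivAt (fun τ => q τ / sqrt ((q τ) ^ 2 + (r τ) ^ 2))
        ((-(r t * p t) * S - q t * 0) / S ^ 2) t := (hq t).div hsqrt hSpos.ne'
    have habs : |q t / S| < 1 := by
      rw [abs_div, abs_of_pos hSpos, div_lt_one hSpos]
      have : |q t| = sqrt ((q t) ^ 2) := (Real.sqrt_sq_eq_abs _).symm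
      rw [this]
      exact Real.sqrt_lt_sqrt (by positivity) (by nlinarith)
    have hne1 : q t / S ≠ 1 := by
      intro h; rw [h] at habs; simp at habs
    have hne1' : q t / S ≠ -1 := by
      intro h; rw [h] at habs; simp at habs
    have harcsin := (Real.hasDerivAt_arcsin hne1' hne1).comp t hu
    have hkey : sqrt (1 - (q t / S) ^ 2) = r t / S := by
      have h1 : 1 - (q t / S) ^ 2 = (r t) ^ 2 / S ^ 2 := by
        field_simp
        nlinarith [hS2]
      rw [h1, Real.sqrt_div (by positivity) _, Real.sqrt_sq hrt.le, Real.sqrt_sq hSpos.le]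
    have hfull := ((((hp t).pow 2).const_mul ((1:ℝ)/2)).add
      (((hq t).add (hs t)).mul harcsin)).sub ((hr t).const_mul (α - 1))
    refine hfull.congr_deriv ?_
    symm
    simp only [Function.comp, Pi.add_apply] at *
    rw [hkey]
    field_simp
    ring
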